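/- Suppose (x(t), θ(t)) solves the closed-loop unicycle dynamics under the forward motion control, and at some time t the alignment e(t) := (cos θ(t), sin θ(t))·(g − x(t)) equals 0 with x(t) ≠ g. Then d/dt e(t) = ω·(−sin θ, cos θ)·(g − x) − v ≥ (k_ω π/2)·‖g − x(t)‖ > 0, where the angular control at such a state equals ω = sgn((−sin θ, cos θ)·(g − x))·k_ω·(π/2) and v = 0. Consequently, if e(0) ≥ 0 then e(t) ≥ 0 for all t ≥ 0 (persistent goal alignment). -/

import Mathlib

open Real Metric Set
open scoped RealInnerProductSpace

noncomputable section

abbrev E2 := EuclideanSpace ℝ (Fin 2)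

/-- Unit forward direction vector of orientation `θ`. -/
def uvec (θ : ℝ) : E2 := WithLp.toLp 2 ![Real.cos θ, Real.sin θ]

/-- Unit normal (perpendicular) vector of orientation `θ`. -/
def nvec (θ : ℝ) : E2 := WithLp.toLp 2 ![-Real.sin θ, Real.cos θ]

/-- Two-argument arctangent, `atan2 y x`. -/
def atan2 (y x : ℝ) : ℝ := Complex.arg (x + y * Complex.I)

lemma inner_uvec' (θ : ℝ) (w : E2) : ⟪uvec θ, w⟫ = Real.cos θ * w 0 + Real.sin θ * w 1 := by
  simp [uvec, PiLp.inner_apply, Fin.sum_univ_two]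
  ring

lemma inner_nvec' (θ : ℝ) (w : E2) : ⟪nvec θ, w⟫ = -Real.sin θ * w 0 + Real.cos θ * w 1 := by
  simp [nvec, PiLp.inner_apply, Fin.sum_univ_two]
  ring

lemma norm_sq_E2 (w : E2) : ‖w‖^2 = w 0 ^2 + w 1 ^2 := by
  rw [EuclideanSpace.norm_eq, Real.sq_sqrt (by positivity)]
  simp [Fin.sum_univ_two]

lemma atan2_pos_zero (n : ℝ) (hn : 0 < n) : atan2 n 0 = π/2 := by
  unfold atan2
  rw [Complex.ofReal_zero, zero_add,
    show (n:ℂ) * Complex.I = (n:ℝ) * Complex.I from rfl, Complex.arg_real_mul _ hn,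
    Complex.arg_I]

lemma atan2_neg_zero (n : ℝ) (hn : n < 0) : atan2 n 0 = -(π/2) := by
  unfold atan2
  have h : ((0:ℝ):ℂ) + (n:ℂ) * Complex.I = ((-n:ℝ):ℂ) * (-Complex.I) := by push_cast; ring
  rw [h, Complex.arg_real_mul _ (by linarith), Complex.arg_neg_I]

/-- Persistent goal alignment under the unicycle forward motion control
(Lemma: Persistent Goal Alignment). -/
theorem stmt_1 (g : E2) (kv kω : ℝ) (hkv : 0 < kv) (hkω : 0 < kω)
    (x : ℝ → E2) (θ : ℝ → ℝ)
    (e : ℝ → ℝ) (he : e = fun s => ⟪uvec (θ s), g - x s⟫)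
    (v : ℝ → ℝ) (hv : v = fun s => kv * max 0 (e s))
    (ω : ℝ → ℝ) (hω : ω = fun s => kω * atan2 ⟪nvec (θ s), g - x s⟫ (e s))
    (hx : ∀ s, HasDerivAt x (v s • uvec (θ s)) s)
    (hθ : ∀ s, HasDerivAt θ (ω s) s) :
    (∀ t, e t = 0 → x t ≠ g →
      HasDerivAt e (ω t * ⟪nvec (θ t), g - x t⟫ - v t) t ∧
      kω * (π / 2) * ‖g - x t‖ ≤ ω t * ⟪nvec (θ t), g - x t⟫ - v t ∧
      0 < ω t * ⟪nvec (θ t), g - x t⟫ - v t) ∧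
    (0 ≤ e 0 → ∀ t, 0 ≤ t → 0 ≤ e t) := by
  -- the derivative of `e` at every time
  have key : ∀ s, HasDerivAt e (ω s * ⟪nvec (θ s), g - x s⟫ - v s) s := by
    intro s
    have hx0 : ∀ s, HasDerivAt (fun s => x s 0) (v s * Real.cos (θ s)) s := by
      intro s
      have := ((EuclideanSpace.proj (0 : Fin 2) : E2 →L[ℝ] ℝ)).hasFDerivAt.comp_hasDerivAt s (hx s)
      simp [uvec] at this
      exact this
    have hx1 : ∀ s, HasDerivAt (fun s => x s 1) (v s * Real.sin (θ s)) s := by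
      intro s
      have := ((EuclideanSpace.proj (1 : Fin 2) : E2 →L[ℝ] ℝ)).hasFDerivAt.comp_hasDerivAt s (hx s)
      simp [uvec] at this
      exact this
    have he' : e = fun s => Real.cos (θ s) * (g 0 - x s 0) + Real.sin (θ s) * (g 1 - x s 1) := by
      rw [he]; funext s; rw [inner_uvec']; simp
    rw [he']
    have hc : HasDerivAt (fun s => Real.cos (θ s)) (-Real.sin (θ s) * ω s) s := (hθ s).cos
    have hs' : HasDerivAt (fun s => Real.sin (θ s)) (Real.cos (θ s) * ω s) s := (hθ s).sin
    have hd0 : HasDerivAt (fun s => g 0 - x s 0) (-(v s * Real.cos (θ s))) s := by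
      exact ((hasDerivAt_const s (g 0)).sub (hx0 s)).congr_deriv (by ring)
    have hd1 : HasDerivAt (fun s => g 1 - x s 1) (-(v s * Real.sin (θ s))) s := by
      exact ((hasDerivAt_const s (g 1)).sub (hx1 s)).congr_deriv (by ring)
    have H := (hc.mul hd0).add (hs'.mul hd1)
    refine H.congr_deriv ?_
    symm
    rw [inner_nvec']
    simp only [PiLp.sub_apply]
    have h1 := Real.sin_sq_add_cos_sq (θ s)
    linear_combination (v s) * h1
  -- part 1
  have part1 : ∀ t, e t = 0 → x t ≠ g →
      HasDerivAt e (ω t * ⟪nvec (θ t), g - x t⟫ - v t) t ∧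
      kω * (π / 2) * ‖g - x t‖ ≤ ω t * ⟪nvec (θ t), g - x t⟫ - v t ∧
      0 < ω t * ⟪nvec (θ t), g - x t⟫ - v t := by
    intro t het hxg
    refine ⟨key t, ?_⟩
    have het' : (⟪uvec (θ t), g - x t⟫ : ℝ) = 0 := by rw [he] at het; simpa using het
    have hvt : v t = 0 := by rw [hv]; simp [het]
    set n := ⟪nvec (θ t), g - x t⟫ with hn
    -- `n^2 = ‖g - x t‖^2`
    have hsq : n^2 = ‖g - x t‖^2 := by
      have he0 : Real.cos (θ t) * (g - x t) 0 + Real.sin (θ t) * (g - x t) 1 = 0 := by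
        rw [← inner_uvec']; exact het'
      rw [hn, inner_nvec', norm_sq_E2]
      have h1 := Real.sin_sq_add_cos_sq (θ t)
      nlinarith [he0, h1]
    have hdpos : 0 < ‖g - x t‖ := by
      rw [norm_pos_iff, sub_ne_zero]
      exact fun h => hxg h.symm
    have hnne : n ≠ 0 := by
      intro h
      rw [h] at hsq
      nlinarith
    have hωt : ω t = kω * atan2 n 0 := by
      simp only [hω, het]
      rfl
    have hmain : ω t * n - v t = kω * (π / 2) * ‖g - x t‖ := by
      rw [hvt, sub_zero]
      rcases hnne.lt_or_gt with hneg | hpos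
      · have habs : -n = ‖g - x t‖ := by nlinarith
        rw [hωt, atan2_neg_zero n hneg]
        linear_combination (kω * (π/2)) * habs
      · have habs : n = ‖g - x t‖ := by nlinarith
        rw [hωt, atan2_pos_zero n hpos]
        linear_combination (kω * (π/2)) * habs
    constructor
    · rw [hmain]
    · rw [hmain]
      have hπ : 0 < π / 2 := by positivity
      positivity
  refine ⟨part1, ?_⟩
  -- part 2: persistence
  intro h0 t1 ht1
  by_contra hneg
  push_neg at hneg
  have hce : Continuous e := by
    rw [continuous_iff_continuousAt]; exact fun s => (key s).continuousAt
  set A : Set ℝ := {s ∈ Icc 0 t1 | 0 ≤ e s} with hA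
  have hA0 : (0:ℝ) ∈ A := ⟨⟨le_refl 0, ht1⟩, h0⟩
  have hAne : A.Nonempty := ⟨0, hA0⟩
  have hAbdd : BddAbove A := ⟨t1, fun s hs => hs.1.2⟩
  set t0 := sSup A with ht0
  have ht0mem : t0 ∈ Icc 0 t1 :=
    ⟨le_csSup hAbdd hA0, csSup_le hAne (fun s hs => hs.1.2)⟩
  have ht0e : 0 ≤ e t0 := by
    have h1 : t0 ∈ closure A := csSup_mem_closure hAne hAbdd
    have hclosed : IsClosed {s : ℝ | 0 ≤ e s} := isClosed_le continuous_const hce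
    have h2 : closure A ⊆ {s : ℝ | 0 ≤ e s} := by
      rw [← hclosed.closure_eq]
      exact closure_mono (fun s hs => hs.2)
    exact h2 h1
  have ht0lt : t0 < t1 := lt_of_le_of_ne ht0mem.2 (fun h => by rw [h] at ht0e; linarith)
  have hlt : ∀ s, t0 < s → s ≤ t1 → e s < 0 := by
    intro s hs1 hs2
    by_contra h
    push_neg at h
    have : s ∈ A := ⟨⟨le_trans ht0mem.1 hs1.le, hs2⟩, h⟩
    exact absurd (le_csSup hAbdd this) (not_le.mpr hs1)
  have ht0e0 : e t0 = 0 := by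
    refine le_antisymm ?_ ht0e
    have htend : Filter.Tendsto e (nhdsWithin t0 (Ioi t0)) (nhds (e t0)) :=
      (hce.continuousAt).mono_left nhdsWithin_le_nhds
    refine le_of_tendsto htend ?_
    filter_upwards [Ioc_mem_nhdsGT_of_mem ⟨le_rfl, ht0lt⟩] with s hs
    exact (hlt s hs.1 hs.2).le
  -- `x` is constant on `[t0, t1]`
  have hxcont : Continuous x := by
    rw [continuous_iff_continuousAt]; exact fun s => (hx s).continuousAt
  have hxconst : ∀ s ∈ Icc t0 t1, x s = x t0 := by
    apply constant_of_has_deriv_right_zero hxcont.continuousOn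
    intro s hs
    have hes : e s ≤ 0 := by
      rcases eq_or_lt_of_le hs.1 with h | h
      · rw [← h, ht0e0]
      · exact (hlt s h hs.2.le).le
    have hvs : v s = 0 := by
      rw [hv]; simp [max_eq_left hes]
    have := hx s
    rw [hvs, zero_smul] at this
    exact this.hasDerivWithinAt
  by_cases hpg : x t0 = g
  · have hx1g : x t1 = g := (hxconst t1 ⟨ht0lt.le, le_rfl⟩).trans hpg
    have : e t1 = 0 := by rw [he]; simp [hx1g]
    linarith
  · obtain ⟨hD, _, hpos⟩ := part1 t0 ht0e0 hpg
    have hslope : Filter.Tendsto (slope e t0) (nhdsWithin t0 (Ioi t0))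
        (nhds (ω t0 * ⟪nvec (θ t0), g - x t0⟫ - v t0)) :=
      (hasDerivAt_iff_tendsto_slope.mp hD).mono_left
        (nhdsWithin_mono _ (fun s hs => ne_of_gt hs))
    have hev : ∀ᶠ s in nhdsWithin t0 (Ioi t0), 0 < slope e t0 s :=
      hslope.eventually (eventually_gt_nhds hpos)
    have hmem : Ioc t0 t1 ∈ nhdsWithin t0 (Ioi t0) := Ioc_mem_nhdsGT_of_mem ⟨le_rfl, ht0lt⟩
    obtain ⟨s, hs1, hs2⟩ := (hev.and (Filter.eventually_of_mem hmem (fun s hs => hs))).exists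
    have hesneg : e s < 0 := hlt s hs2.1 hs2.2
    rw [slope_def_field, ht0e0, sub_zero] at hs1
    have hst : 0 < s - t0 := sub_pos.mpr hs2.1
    have : e s / (s - t0) < 0 := div_neg_of_neg_of_pos hesneg hst
    linarith
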